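/- Let e₁,…,e_m ∈ ℝ^d be linearly independent vectors with integer coordinates, let τ := {Σᵢ λᵢeᵢ : λᵢ ≥ 0 for all i}, let W := span_ℝ{e₁,…,e_m}, and let G be a finite-index additive subgroup of ℤ^d ∩ W. Then the additive subgroup of ℝ^d generated by Int(G ∩ τ) equals G. -/

import Mathlib

/-- The subgroup `ℤ^d ⊆ ℝ^d` of vectors with integer coordinates. -/
def intLattice (d : ℕ) : AddSubgroup (Fin d → ℝ) where
  carrier := {x | ∀ i, ∃ z : ℤ, x i = (z : ℝ)}
  zero_mem' := fun i => ⟨0, by simp⟩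
  add_mem' := by
    intro a b ha hb i
    obtain ⟨z, hz⟩ := ha i
    obtain ⟨w, hw⟩ := hb i
    exact ⟨z + w, by simp [hz, hw]⟩
  neg_mem' := by
    intro a ha i
    obtain ⟨z, hz⟩ := ha i
    exact ⟨-z, by simp [hz]⟩

/-- The *interior* of a subset `S` of an additive commutative monoid:
`{x ∈ S | ∀ y ∈ S, ∃ n ∈ ℕ, ∃ z ∈ S, n • x = y + z}`. -/
def setInterior {M : Type*} [AddCommMonoid M] (S : Set M) : Set M :=
  {x | x ∈ S ∧ ∀ y ∈ S, ∃ n : ℕ, ∃ z ∈ S, n • x = y + z}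

private lemma aux_coe_sum {d m : ℕ} {e : Fin m → (Fin d → ℝ)}
    (hindep : LinearIndependent ℝ e) (lam : Fin m → ℝ) :
    ((∑ i, lam i • Module.Basis.span hindep i :
        Submodule.span ℝ (Set.range e)) : Fin d → ℝ) = ∑ i, lam i • e i := by
  push_cast
  simp [Module.Basis.span_apply]

/-- Let `τ` be the cone generated by linearly independent integral vectors
`e₁,…,e_m`, `W` their span, and `G` a finite-index subgroup of `ℤ^d ∩ W`.
Then the subgroup generated by `Int(G ∩ τ)` equals `G`. -/
theorem closure_setInterior_eq (d m : ℕ) (e : Fin m → (Fin d → ℝ))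
    (hindep : LinearIndependent ℝ e)
    (hint : ∀ i j, ∃ z : ℤ, e i j = (z : ℝ))
    (τ : Set (Fin d → ℝ))
    (hτ : τ = {x | ∃ lam : Fin m → ℝ, (∀ i, 0 ≤ lam i) ∧ x = ∑ i, lam i • e i})
    (G : AddSubgroup (Fin d → ℝ))
    (hle : G ≤ intLattice d ⊓ (Submodule.span ℝ (Set.range e)).toAddSubgroup)
    (hfin : (G.addSubgroupOf
      (intLattice d ⊓ (Submodule.span ℝ (Set.range e)).toAddSubgroup)).FiniteIndex) :
    AddSubgroup.closure (setInterior ((G : Set (Fin d → ℝ)) ∩ τ)) = G := by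
  set W : Submodule ℝ (Fin d → ℝ) := Submodule.span ℝ (Set.range e) with hW
  set L : AddSubgroup (Fin d → ℝ) := intLattice d ⊓ W.toAddSubgroup with hL
  set b : Module.Basis (Fin m) ℝ W := Module.Basis.span hindep with hb
  -- membership of G elements in W
  have hGW : ∀ x ∈ G, x ∈ W := fun x hx => (hle hx).2
  -- sum of coeffs • e i is in W
  have hsumW : ∀ (lam : Fin m → ℝ), (∑ i, lam i • e i) ∈ W := by
    intro lam
    exact Submodule.sum_mem _ fun i _ =>
      Submodule.smul_mem _ _ (Submodule.subset_span ⟨i, rfl⟩)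
  -- subtype of a sum equals sum in W
  have hsum_sub : ∀ (lam : Fin m → ℝ),
      (⟨∑ i, lam i • e i, hsumW lam⟩ : W) = ∑ i, lam i • b i := by
    intro lam
    apply Subtype.ext
    exact (aux_coe_sum hindep lam).symm
  have hrepr_sum : ∀ (lam : Fin m → ℝ) i,
      b.repr ⟨∑ i, lam i • e i, hsumW lam⟩ i = lam i := by
    intro lam i
    rw [hsum_sub lam, Module.Basis.repr_sum_self]
  -- x ∈ τ iff coords nonneg, for x : W
  have hτ_of : ∀ (x : W), (∀ i, 0 ≤ b.repr x i) → (x : Fin d → ℝ) ∈ τ := by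
    intro x hx
    rw [hτ]
    refine ⟨fun i => b.repr x i, hx, ?_⟩
    have h1 := b.sum_repr x
    have h2 : ((∑ i, b.repr x i • b i : W) : Fin d → ℝ) = ∑ i, b.repr x i • e i :=
      aux_coe_sum hindep fun i => b.repr x i
    exact (congrArg Subtype.val h1.symm).trans h2
  have hcoord_of : ∀ (x : W), (x : Fin d → ℝ) ∈ τ → ∀ i, 0 ≤ b.repr x i := by
    intro x hx i
    rw [hτ] at hx
    obtain ⟨lam, hlam, hx2⟩ := hx
    have hxe : x = ⟨∑ i, lam i • e i, hsumW lam⟩ := Subtype.ext hx2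
    rw [hxe, hrepr_sum]
    exact hlam i
  -- interior criterion: g ∈ G with strictly positive coords is interior
  have hint_mem : ∀ (g : Fin d → ℝ) (hgG : g ∈ G) (hgW : g ∈ W),
      (∀ i, 0 < b.repr ⟨g, hgW⟩ i) → g ∈ setInterior ((G : Set (Fin d → ℝ)) ∩ τ) := by
    intro g hgG hgW hpos
    refine ⟨⟨hgG, hτ_of ⟨g, hgW⟩ fun i => (hpos i).le⟩, ?_⟩
    rintro y ⟨hyG, hyτ⟩
    have hyW : y ∈ W := hGW y hyG
    set μ : Fin m → ℝ := fun i => b.repr ⟨y, hyW⟩ i with hμ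
    have hμ0 : ∀ i, 0 ≤ μ i := hcoord_of ⟨y, hyW⟩ hyτ
    set n : ℕ := Finset.univ.sup fun i => ⌈μ i / b.repr ⟨g, hgW⟩ i⌉₊ with hn
    have hle' : ∀ i, μ i ≤ n * b.repr ⟨g, hgW⟩ i := by
      intro i
      rw [← div_le_iff₀ (hpos i)]
      calc μ i / b.repr ⟨g, hgW⟩ i ≤ (⌈μ i / b.repr ⟨g, hgW⟩ i⌉₊ : ℝ) := Nat.le_ceil _
        _ ≤ (n : ℝ) := by
            have := Finset.le_sup (f := fun i => ⌈μ i / b.repr ⟨g, hgW⟩ i⌉₊)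
              (Finset.mem_univ i)
            rw [hn]
            exact_mod_cast this
    refine ⟨n, n • g - y, ⟨?_, ?_⟩, by abel⟩
    · exact sub_mem (nsmul_mem hgG n) hyG
    · have hmem : n • g - y ∈ W := sub_mem (nsmul_mem hgW n) hyW
      have : (⟨n • g - y, hmem⟩ : W) = n • (⟨g, hgW⟩ : W) - ⟨y, hyW⟩ := rfl
      refine hτ_of ⟨n • g - y, hmem⟩ fun i => ?_
      rw [this]
      have h4 : b.repr (n • (⟨g, hgW⟩ : W) - ⟨y, hyW⟩) i
          = (n • b.repr (⟨g, hgW⟩ : W) - b.repr ⟨y, hyW⟩) i := by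
        rw [map_sub, map_nsmul]
      rw [h4]
      have h5 : (n • b.repr (⟨g, hgW⟩ : W) - b.repr ⟨y, hyW⟩) i
          = n * b.repr (⟨g, hgW⟩ : W) i - μ i := by
        simp [hμ, nsmul_eq_mul]
      rw [h5]
      linarith [hle' i]
  -- the index N, and x₀ = N • ∑ e i
  set N : ℕ := (G.addSubgroupOf L).index with hN
  have hN0 : 0 < N := Nat.pos_of_ne_zero hfin.index_ne_zero
  have heL : ∀ i, e i ∈ L := by
    intro i
    exact ⟨fun j => hint i j, Submodule.subset_span ⟨i, rfl⟩⟩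
  have hsL : (∑ i, e i) ∈ L := sum_mem fun i _ => heL i
  have hNsmul : ∀ x ∈ L, N • x ∈ G := by
    intro x hx
    have := (G.addSubgroupOf L).nsmul_index_mem (⟨x, hx⟩ : L)
    simpa [AddSubgroup.mem_addSubgroupOf] using this
  set x₀ : Fin d → ℝ := N • ∑ i, e i with hx₀
  have hx₀G : x₀ ∈ G := hNsmul _ hsL
  have hx₀W : x₀ ∈ W := (hle hx₀G).2
  have hx₀eq : x₀ = ∑ i, (N : ℝ) • e i := by
    rw [hx₀, ← Finset.smul_sum]
    simp [Nat.cast_smul_eq_nsmul]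
  have hx₀coord : ∀ i, b.repr ⟨x₀, hx₀W⟩ i = (N : ℝ) := by
    intro i
    have : (⟨x₀, hx₀W⟩ : W) = ⟨∑ i, (fun _ => (N:ℝ)) i • e i, hsumW _⟩ :=
      Subtype.ext (by simpa using hx₀eq)
    rw [this, hrepr_sum]
  -- conclusion
  apply le_antisymm
  · rw [AddSubgroup.closure_le]
    exact fun x hx => hx.1.1
  · intro g hgG
    have hgW : g ∈ W := (hle hgG).2
    set c : Fin m → ℝ := fun i => b.repr ⟨g, hgW⟩ i with hc
    set n : ℕ := (Finset.univ.sup fun i => ⌈(-c i) / N⌉₊) + 1 with hn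
    have hnpos : ∀ i, 0 < c i + (n * N : ℕ) := by
      intro i
      have h1 : (-c i) / N ≤ ((Finset.univ.sup fun i => ⌈(-c i) / N⌉₊ : ℕ) : ℝ) := by
        calc (-c i) / N ≤ (⌈(-c i) / N⌉₊ : ℝ) := Nat.le_ceil _
          _ ≤ _ := by
              have := Finset.le_sup (f := fun i => ⌈(-c i) / N⌉₊) (Finset.mem_univ i)
              exact_mod_cast this
      have h2 : (-c i) / N < ((Finset.univ.sup fun i => ⌈(-c i) / N⌉₊ : ℕ) : ℝ) + 1 := by
        linarith
      have h3 : -c i < (((Finset.univ.sup fun i => ⌈(-c i) / N⌉₊ : ℕ) : ℝ) + 1) * N := by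
        rw [div_lt_iff₀ (by exact_mod_cast hN0 : (0:ℝ) < N)] at h2
        linarith
      rw [hn]
      push_cast
      linarith
    have hgx : g + n • x₀ ∈ G := add_mem hgG (nsmul_mem hx₀G n)
    have hgxW : g + n • x₀ ∈ W := (hle hgx).2
    have hcoords : ∀ i, b.repr ⟨g + n • x₀, hgxW⟩ i = c i + (n * N : ℕ) := by
      intro i
      have h1 : (⟨g + n • x₀, hgxW⟩ : W) = (⟨g, hgW⟩ : W) + n • ⟨x₀, hx₀W⟩ := rfl
      rw [h1]
      simp only [map_add, map_nsmul, Finsupp.add_apply, Finsupp.coe_add, Pi.add_apply]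
      rw [hc]
      have : (n • b.repr ⟨x₀, hx₀W⟩) i = n * (N : ℝ) := by
        simp [nsmul_eq_mul, hx₀coord i]
      rw [this]; push_cast; ring
    have h1 : g + n • x₀ ∈ setInterior ((G : Set (Fin d → ℝ)) ∩ τ) := by
      apply hint_mem _ hgx hgxW
      intro i
      rw [hcoords i]
      exact hnpos i
    have h2 : x₀ ∈ setInterior ((G : Set (Fin d → ℝ)) ∩ τ) := by
      apply hint_mem _ hx₀G hx₀W
      intro i
      rw [hx₀coord i]
      exact_mod_cast hN0
    have hm1 : g + n • x₀ ∈ AddSubgroup.closure (setInterior ((G : Set (Fin d → ℝ)) ∩ τ)) :=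
      AddSubgroup.subset_closure h1
    have hm2 : n • x₀ ∈ AddSubgroup.closure (setInterior ((G : Set (Fin d → ℝ)) ∩ τ)) :=
      nsmul_mem (AddSubgroup.subset_closure h2) n
    have := sub_mem hm1 hm2
    simpa using this
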